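/- Fix T ∈ ℕ, σ > 0, ρ ∈ [0, 1] and t ∈ (0, 1]. Let X₁, …, X_T and Z₁, …, Z_T be centered square-integrable real random variables on a common probability space with E[X_i X_j] = ρ^{|i−j|} σ² for all i, j, with E[Z_j X_i] = 0 for all i, j, and E[Z_j Z_k] = 0 for j ≠ k. Define reconstructions by X̂₁ := √t · X₁ + Z₁ and, for 2 ≤ j ≤ T, X̂_j := ρ · X̂_{j−1} + √((1 − ρ²) t) · X_j + Z_j. Then for every 1 ≤ j ≤ T, E[X_j X̂_j] = Δ_{JD,j} · √t · σ², where Δ_{JD,j} := ρ^{2(j−1)} + √(1 − ρ²) · Σ_{i=0}^{j−2} ρ^{2i} (the sum being empty for j = 1). Consequently, if in addition E[X̂_j²] = σ², then E[(X_j − X̂_j)²] = 2(1 − Δ_{JD,j} √t) σ². In particular for ρ = 1 one has Δ_{JD,j} = 1 for every j, so the distortion does not improve with j — the permanence-of-error phenomenon under the joint-distribution perception loss. -/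

import Mathlib

open MeasureTheory

/-- The correlation gain `Δ_{JD,j} = ρ^{2(j−1)} + √(1 − ρ²)·Σ_{i=0}^{j−2} ρ^{2i}` of the
zero joint-distribution perception loss decoder at frame `j`. -/
noncomputable def ΔJD (ρ : ℝ) (j : ℕ) : ℝ :=
  ρ ^ (2 * (j - 1)) + Real.sqrt (1 - ρ ^ 2) * ∑ i ∈ Finset.range (j - 1), ρ ^ (2 * i)

private lemma integrable_mul_of_memL2 {Ω : Type*} [MeasurableSpace Ω] {P : Measure Ω}
    {f g : Ω → ℝ} (hf : MemLp f 2 P) (hg : MemLp g 2 P) :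
    Integrable (fun ω => f ω * g ω) P := by
  have hb : Integrable (fun ω => (f ω ^ 2 + g ω ^ 2) / 2) P :=
    (hf.integrable_sq.add hg.integrable_sq).div_const 2
  refine Integrable.mono' hb
    (hf.aestronglyMeasurable.mul hg.aestronglyMeasurable) ?_
  filter_upwards with ω
  rw [Real.norm_eq_abs, abs_mul]
  nlinarith [sq_nonneg (|f ω| - |g ω|), abs_nonneg (f ω), abs_nonneg (g ω),
    sq_abs (f ω), sq_abs (g ω)]

private lemma ΔJD_succ (ρ : ℝ) {j : ℕ} (hj : 1 ≤ j) :
    ΔJD ρ (j + 1) = ρ ^ 2 * ΔJD ρ j + Real.sqrt (1 - ρ ^ 2) := by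
  obtain ⟨k, rfl⟩ : ∃ k, j = k + 1 := ⟨j - 1, by omega⟩
  simp only [ΔJD, Nat.add_sub_cancel]
  have e1 : ρ ^ (2 * (k + 1)) = ρ ^ 2 * ρ ^ (2 * k) := by rw [← pow_add]; ring_nf
  have e2 : ∑ i ∈ Finset.range (k + 1), ρ ^ (2 * i)
      = 1 + ρ ^ 2 * ∑ i ∈ Finset.range k, ρ ^ (2 * i) := by
    rw [Finset.sum_range_succ', Finset.mul_sum]
    simp only [mul_zero, pow_zero]
    rw [add_comm]
    congr 1
    refine Finset.sum_congr rfl fun i _ => ?_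
    rw [← pow_add]; ring_nf
  rw [e1, e2]; ring

/-- Per-frame correlation and distortion of the 0-PLF-JD reconstructions
`X̂₁ = √t·X₁ + Z₁`, `X̂_j = ρ·X̂_{j−1} + √((1 − ρ²)t)·X_j + Z_j` for a stationary source
with covariance `E[X_i X_j] = ρ^{|i−j|}σ²` and orthogonal noises: for every `1 ≤ j ≤ T`,
`E[X_j X̂_j] = Δ_{JD,j}·√t·σ²`, and if moreover `E[X̂_j²] = σ²`, then
`E[(X_j − X̂_j)²] = 2(1 − Δ_{JD,j}√t)σ²`.  For `ρ = 1`, `Δ_{JD,j} = 1` for all `j`: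
the permanence-of-error phenomenon. -/
theorem statement13 {Ω : Type*} [MeasurableSpace Ω] (P : Measure Ω) [IsProbabilityMeasure P]
    (T : ℕ) (σ ρ t : ℝ) (hσ : 0 < σ) (hρ : ρ ∈ Set.Icc (0 : ℝ) 1) (ht : t ∈ Set.Ioc (0 : ℝ) 1)
    (X Z Xhat : ℕ → Ω → ℝ)
    (hXmem : ∀ j, 1 ≤ j → j ≤ T → MemLp (X j) 2 P)
    (hZmem : ∀ j, 1 ≤ j → j ≤ T → MemLp (Z j) 2 P)
    (hXcentered : ∀ j, 1 ≤ j → j ≤ T → ∫ ω, X j ω ∂P = 0)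
    (hZcentered : ∀ j, 1 ≤ j → j ≤ T → ∫ ω, Z j ω ∂P = 0)
    (hXX : ∀ i j, 1 ≤ i → i ≤ T → 1 ≤ j → j ≤ T →
      ∫ ω, X i ω * X j ω ∂P = ρ ^ ((i : ℤ) - (j : ℤ)).natAbs * σ ^ 2)
    (hZX : ∀ i j, 1 ≤ i → i ≤ T → 1 ≤ j → j ≤ T → ∫ ω, Z j ω * X i ω ∂P = 0)
    (hZZ : ∀ j k, 1 ≤ j → j ≤ T → 1 ≤ k → k ≤ T → j ≠ k → ∫ ω, Z j ω * Z k ω ∂P = 0)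
    (hXhat1 : Xhat 1 = fun ω => Real.sqrt t * X 1 ω + Z 1 ω)
    (hXhatrec : ∀ j, 2 ≤ j → j ≤ T → Xhat j = fun ω =>
      ρ * Xhat (j - 1) ω + Real.sqrt ((1 - ρ ^ 2) * t) * X j ω + Z j ω) :
    ∀ j, 1 ≤ j → j ≤ T →
      (∫ ω, X j ω * Xhat j ω ∂P = ΔJD ρ j * Real.sqrt t * σ ^ 2) ∧
      ((∫ ω, Xhat j ω ^ 2 ∂P = σ ^ 2) →
        ∫ ω, (X j ω - Xhat j ω) ^ 2 ∂P = 2 * (1 - ΔJD ρ j * Real.sqrt t) * σ ^ 2) := by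
  obtain ⟨hρ0, hρ1⟩ := hρ
  have hρsq : (0 : ℝ) ≤ 1 - ρ ^ 2 := by nlinarith
  -- Key inductive claim
  have key : ∀ j, 1 ≤ j → j ≤ T → MemLp (Xhat j) 2 P ∧
      (∀ m, j ≤ m → m ≤ T →
        ∫ ω, X m ω * Xhat j ω ∂P = ρ ^ (m - j) * (ΔJD ρ j * Real.sqrt t * σ ^ 2)) := by
    intro j hj
    induction j, hj using Nat.le_induction with
    | base =>
      intro h1T
      constructor
      · rw [hXhat1]
        exact ((hXmem 1 le_rfl h1T).const_mul _).add (hZmem 1 le_rfl h1T)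
      · intro m h1m hmT
        rw [hXhat1]
        have hXm := hXmem m h1m hmT
        have hi1 : Integrable (fun ω => Real.sqrt t * (X m ω * X 1 ω)) P :=
          (integrable_mul_of_memL2 hXm (hXmem 1 le_rfl h1T)).const_mul _
        have hi2 : Integrable (fun ω => X m ω * Z 1 ω) P :=
          integrable_mul_of_memL2 hXm (hZmem 1 le_rfl h1T)
        have : (∫ ω, X m ω * (Real.sqrt t * X 1 ω + Z 1 ω) ∂P)
            = ∫ ω, Real.sqrt t * (X m ω * X 1 ω) + X m ω * Z 1 ω ∂P := by
          congr 1; funext ω; ring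
        rw [this, integral_add hi1 hi2, integral_const_mul]
        have hZ1 : (∫ ω, X m ω * Z 1 ω ∂P) = 0 := by
          rw [show (fun ω => X m ω * Z 1 ω) = fun ω => Z 1 ω * X m ω from funext fun ω => mul_comm _ _]
          exact hZX m 1 h1m hmT le_rfl h1T
        rw [hZ1, hXX m 1 h1m hmT le_rfl h1T]
        have habs : ((m : ℤ) - (((1 : ℕ) : ℤ))).natAbs = m - 1 := by push_cast; omega
        rw [habs]
        simp only [ΔJD, Nat.sub_self, mul_zero, pow_zero, Finset.range_zero,
          Finset.sum_empty, add_zero, one_mul]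
        ring
    | succ j hj IH =>
      intro hjT
      have hjT' : j ≤ T := by omega
      obtain ⟨hmemj, hintj⟩ := IH hjT'
      have hrec := hXhatrec (j + 1) (by omega) hjT
      rw [show j + 1 - 1 = j from rfl] at hrec
      have hXj1 := hXmem (j + 1) (by omega) hjT
      have hZj1 := hZmem (j + 1) (by omega) hjT
      have hmem : MemLp (Xhat (j + 1)) 2 P := by
        rw [hrec]
        exact ((hmemj.const_mul ρ).add (hXj1.const_mul _)).add hZj1
      refine ⟨hmem, fun m hm hmT => ?_⟩
      have hXm := hXmem m (by omega) hmT
      have hi1 : Integrable (fun ω => ρ * (X m ω * Xhat j ω)) P :=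
        (integrable_mul_of_memL2 hXm hmemj).const_mul _
      have hi2 : Integrable (fun ω => Real.sqrt ((1 - ρ ^ 2) * t) * (X m ω * X (j + 1) ω)) P :=
        (integrable_mul_of_memL2 hXm hXj1).const_mul _
      have hi3 : Integrable (fun ω => X m ω * Z (j + 1) ω) P :=
        integrable_mul_of_memL2 hXm hZj1
      rw [hrec]
      have : (∫ ω, X m ω * (ρ * Xhat j ω + Real.sqrt ((1 - ρ ^ 2) * t) * X (j + 1) ω
            + Z (j + 1) ω) ∂P)
          = ∫ ω, (ρ * (X m ω * Xhat j ω)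
            + Real.sqrt ((1 - ρ ^ 2) * t) * (X m ω * X (j + 1) ω)) + X m ω * Z (j + 1) ω ∂P := by
        congr 1; funext ω; ring
      have hi12 : Integrable (fun ω => ρ * (X m ω * Xhat j ω)
          + Real.sqrt ((1 - ρ ^ 2) * t) * (X m ω * X (j + 1) ω)) P := hi1.add hi2
      rw [this, integral_add hi12 hi3, integral_add hi1 hi2,
        integral_const_mul, integral_const_mul]
      have hZ0 : (∫ ω, X m ω * Z (j + 1) ω ∂P) = 0 := by
        rw [show (fun ω => X m ω * Z (j + 1) ω) = fun ω => Z (j + 1) ω * X m ω from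
          funext fun ω => mul_comm _ _]
        exact hZX m (j + 1) (by omega) hmT (by omega) hjT
      rw [hZ0, hintj m (by omega) hmT, hXX m (j + 1) (by omega) hmT (by omega) hjT]
      have habs : ((m : ℤ) - (((j + 1 : ℕ)) : ℤ)).natAbs = m - (j + 1) := by
        push_cast; omega
      rw [habs]
      have hsqrt : Real.sqrt ((1 - ρ ^ 2) * t) = Real.sqrt (1 - ρ ^ 2) * Real.sqrt t :=
        Real.sqrt_mul hρsq t
      have hpow : ρ ^ (m - j) = ρ ^ (m - (j + 1)) * ρ := by
        rw [← pow_succ]; congr 1; omega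
      have hpow2 : ρ ^ (m - (j + 1) + 1) = ρ ^ (m - (j + 1)) * ρ := pow_succ _ _
      rw [ΔJD_succ ρ hj, hsqrt, hpow]
      ring
  -- conclude
  intro j hj hjT
  obtain ⟨hmemj, hintj⟩ := key j hj hjT
  have hcorr : (∫ ω, X j ω * Xhat j ω ∂P) = ΔJD ρ j * Real.sqrt t * σ ^ 2 := by
    have := hintj j le_rfl hjT
    rwa [Nat.sub_self, pow_zero, one_mul] at this
  refine ⟨hcorr, fun hvar => ?_⟩
  have hXj := hXmem j hj hjT
  have hXsq : (∫ ω, X j ω ^ 2 ∂P) = σ ^ 2 := by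
    have := hXX j j hj hjT hj hjT
    simp only [sub_self, Int.natAbs_zero, pow_zero, one_mul] at this
    simpa [sq] using this
  have hi1 : Integrable (fun ω => X j ω ^ 2) P := hXj.integrable_sq
  have hi2 : Integrable (fun ω => X j ω * Xhat j ω) P := integrable_mul_of_memL2 hXj hmemj
  have hi3 : Integrable (fun ω => Xhat j ω ^ 2) P := hmemj.integrable_sq
  have hsplit : (∫ ω, (X j ω - Xhat j ω) ^ 2 ∂P)
      = (∫ ω, X j ω ^ 2 ∂P) - 2 * (∫ ω, X j ω * Xhat j ω ∂P) + ∫ ω, Xhat j ω ^ 2 ∂P := by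
    have : (fun ω => (X j ω - Xhat j ω) ^ 2)
        = fun ω => (X j ω ^ 2 - 2 * (X j ω * Xhat j ω)) + Xhat j ω ^ 2 := by
      funext ω; ring
    have hi2' : Integrable (fun ω => 2 * (X j ω * Xhat j ω)) P := hi2.const_mul 2
    have hi12 : Integrable (fun ω => X j ω ^ 2 - 2 * (X j ω * Xhat j ω)) P := hi1.sub hi2'
    rw [this, integral_add hi12 hi3, integral_sub hi1 hi2', integral_const_mul]
  rw [hsplit, hXsq, hcorr, hvar]
  ring
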